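/- Let Ψ : B → ℂ be continuous on an interval B, and define Φ(b) = ∫_{b₀'}^{b} Ψ. Then for every N ≥ 2, b ∈ ℝ, ε ∈ [0,1), with all relevant points in B: d/db [Σ_{ν=0}^N binom(N,ν)·b^ν(1−b)^{N−ν}·Φ(b₀' + ν(1−ε)/N)] = (1−ε)·∫_0^1 Σ_{ν=0}^{N−1} binom(N−1,ν)·b^ν(1−b)^{N−1−ν}·Ψ(b₀' + (1−ε)ξ/N + ν·(1−ε')/(N−1)) dξ, where 1−ε' = ((N−1)/N)(1−ε). -/

import Mathlib

open Finset intervalIntegral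

-- derivative of one Bernstein-type term
lemma term_deriv (K : ℂ) (n m : ℕ) (C : ℂ) (z : ℝ) :
    HasDerivAt (fun b : ℝ => K * (b : ℂ) ^ n * (1 - (b : ℂ)) ^ m * C)
      (K * ((n : ℂ) * (z : ℂ) ^ (n - 1) * (1 - (z : ℂ)) ^ m
        - (m : ℂ) * (z : ℂ) ^ n * (1 - (z : ℂ)) ^ (m - 1)) * C) z := by
  have h2 : HasDerivAt (fun w : ℂ => (1 - w) ^ m)
      ((m : ℂ) * (1 - (z : ℂ)) ^ (m - 1) * (-1)) (z : ℝ) := by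
    exact (hasDerivAt_pow m (1 - (z : ℂ))).comp _ ((hasDerivAt_id _).const_sub 1)
  have h1 : HasDerivAt (fun w : ℂ => K * w ^ n * (1 - w) ^ m * C)
      ((K * ((n : ℂ) * (z : ℂ) ^ (n - 1)) * (1 - (z : ℂ)) ^ m
        + (K * (z:ℂ)^n) * ((m : ℂ) * (1 - (z : ℂ)) ^ (m - 1) * (-1))) * C) (z : ℝ) :=
    (((hasDerivAt_pow n ((z : ℝ) : ℂ)).const_mul K).mul h2).mul_const C
  have := h1.comp_ofReal
  convert this using 1
  ring

-- key combinatorial identity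
lemma key (N : ℕ) (hN : 1 ≤ N) (z : ℂ) (c : ℕ → ℂ) :
    ∑ ν ∈ range (N + 1),
      (N.choose ν : ℂ) * ((ν : ℂ) * z ^ (ν - 1) * (1 - z) ^ (N - ν)
        - ((N - ν : ℕ) : ℂ) * z ^ ν * (1 - z) ^ (N - ν - 1)) * c ν
    = (N : ℂ) * ∑ ν ∈ range N,
        ((N - 1).choose ν : ℂ) * z ^ ν * (1 - z) ^ (N - 1 - ν) * (c (ν + 1) - c ν) := by
  have split : ∀ ν ∈ range (N+1),
      (N.choose ν : ℂ) * ((ν : ℂ) * z ^ (ν - 1) * (1 - z) ^ (N - ν)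
        - ((N - ν : ℕ) : ℂ) * z ^ ν * (1 - z) ^ (N - ν - 1)) * c ν
      = (N.choose ν : ℂ) * ((ν : ℂ) * z ^ (ν - 1) * (1 - z) ^ (N - ν)) * c ν
        - (N.choose ν : ℂ) * (((N - ν : ℕ) : ℂ) * z ^ ν * (1 - z) ^ (N - ν - 1)) * c ν := by
    intro ν _; ring
  rw [Finset.sum_congr rfl split, Finset.sum_sub_distrib]
  have hA : ∑ ν ∈ range (N + 1),
      (N.choose ν : ℂ) * ((ν : ℂ) * z ^ (ν - 1) * (1 - z) ^ (N - ν)) * c ν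
      = ∑ ν ∈ range N,
        (N : ℂ) * (((N-1).choose ν : ℂ) * z ^ ν * (1 - z) ^ (N - 1 - ν)) * c (ν + 1) := by
    rw [Finset.sum_range_succ']
    simp only [Nat.cast_zero, zero_mul, mul_zero, zero_mul, add_zero]
    refine Finset.sum_congr rfl fun ν _ => ?_
    have hc : (N : ℕ) * (N - 1).choose ν = N.choose (ν + 1) * (ν + 1) := by
      have := Nat.add_one_mul_choose_eq (N - 1) ν
      rwa [Nat.sub_add_cancel hN] at this
    have hcast : ((N : ℕ) : ℂ) * ((N - 1).choose ν : ℂ)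
        = (N.choose (ν + 1) : ℂ) * ((ν + 1 : ℕ) : ℂ) := by
      exact_mod_cast congrArg (Nat.cast : ℕ → ℂ) hc
    have he1 : (ν + 1) - 1 = ν := rfl
    have he2 : N - (ν + 1) = N - 1 - ν := by omega
    rw [he1, he2]
    push_cast at hcast ⊢
    calc (N.choose (ν + 1) : ℂ) * (((ν : ℂ) + 1) * z ^ ν * (1 - z) ^ (N - 1 - ν)) * c (ν + 1)
        = ((N.choose (ν + 1) : ℂ) * ((ν : ℂ) + 1)) * z ^ ν * (1 - z) ^ (N - 1 - ν) * c (ν + 1) := by ring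
      _ = ((N : ℂ) * ((N - 1).choose ν : ℂ)) * z ^ ν * (1 - z) ^ (N - 1 - ν) * c (ν + 1) := by
          rw [← hcast]
      _ = _ := by ring
  have hB : ∑ ν ∈ range (N + 1),
      (N.choose ν : ℂ) * (((N - ν : ℕ) : ℂ) * z ^ ν * (1 - z) ^ (N - ν - 1)) * c ν
      = ∑ ν ∈ range N,
        (N : ℂ) * (((N-1).choose ν : ℂ) * z ^ ν * (1 - z) ^ (N - 1 - ν)) * c ν := by
    rw [Finset.sum_range_succ]
    simp only [Nat.sub_self, Nat.cast_zero, zero_mul, mul_zero, add_zero]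
    refine Finset.sum_congr rfl fun ν hν => ?_
    have hνN : ν < N := Finset.mem_range.mp hν
    have hc : N.choose ν * (N - ν) = (N : ℕ) * (N - 1).choose ν := by
      have h1 : N.choose (ν + 1) * (ν + 1) = N.choose ν * (N - ν) := Nat.choose_succ_right_eq N ν
      have h2 := Nat.add_one_mul_choose_eq (N - 1) ν
      rw [Nat.sub_add_cancel hN] at h2
      exact (h2.trans h1).symm
    have hcast : (N.choose ν : ℂ) * ((N - ν : ℕ) : ℂ)
        = ((N : ℕ) : ℂ) * ((N - 1).choose ν : ℂ) := by
      exact_mod_cast congrArg (Nat.cast : ℕ → ℂ) hc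
    have he : N - ν - 1 = N - 1 - ν := by omega
    rw [he]
    calc (N.choose ν : ℂ) * (((N - ν : ℕ) : ℂ) * z ^ ν * (1 - z) ^ (N - 1 - ν)) * c ν
        = ((N.choose ν : ℂ) * ((N - ν : ℕ) : ℂ)) * z ^ ν * (1 - z) ^ (N - 1 - ν) * c ν := by ring
      _ = ((N : ℂ) * ((N - 1).choose ν : ℂ)) * z ^ ν * (1 - z) ^ (N - 1 - ν) * c ν := by rw [hcast]
      _ = _ := by ring
  rw [hA, hB, ← Finset.sum_sub_distrib, Finset.mul_sum]
  refine Finset.sum_congr rfl fun ν _ => ?_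
  ring

theorem stmt16 (Ψ : ℝ → ℂ) (hΨ : Continuous Ψ) (b₀' : ℝ)
    (N : ℕ) (hN : 2 ≤ N) (ε ε' : ℝ) (hε : ε ∈ Set.Ico (0 : ℝ) 1)
    (hε' : 1 - ε' = (((N : ℝ) - 1) / N) * (1 - ε)) (b : ℝ) :
    HasDerivAt
      (fun b : ℝ =>
        ∑ ν ∈ Finset.range (N + 1),
          (N.choose ν : ℂ) * (b : ℂ) ^ ν * (1 - (b : ℂ)) ^ (N - ν) *
            ∫ x in b₀'..(b₀' + ν * (1 - ε) / N), Ψ x)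
      ((1 - (ε : ℂ)) *
        ∫ ξ in (0 : ℝ)..1,
          ∑ ν ∈ Finset.range N,
            ((N - 1).choose ν : ℂ) * (b : ℂ) ^ ν * (1 - (b : ℂ)) ^ (N - 1 - ν) *
              Ψ (b₀' + (1 - ε) * ξ / N + ν * (1 - ε') / ((N : ℝ) - 1)))
      b := by
  have hN0 : (N : ℝ) ≠ 0 := by positivity
  have hN1 : (N : ℝ) - 1 ≠ 0 := by
    have : (2 : ℝ) ≤ N := by exact_mod_cast hN
    linarith
  set h : ℝ := (1 - ε) / N with hh
  set c : ℕ → ℂ := fun ν => ∫ x in b₀'..(b₀' + ν * (1 - ε) / N), Ψ x with hc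
  -- the derivative of each term, summed
  have hder : HasDerivAt
      (fun b : ℝ =>
        ∑ ν ∈ Finset.range (N + 1),
          (N.choose ν : ℂ) * (b : ℂ) ^ ν * (1 - (b : ℂ)) ^ (N - ν) * c ν)
      (∑ ν ∈ Finset.range (N + 1),
        (N.choose ν : ℂ) * ((ν : ℂ) * (b : ℂ) ^ (ν - 1) * (1 - (b : ℂ)) ^ (N - ν)
          - ((N - ν : ℕ) : ℂ) * (b : ℂ) ^ ν * (1 - (b : ℂ)) ^ (N - ν - 1)) * c ν) b := by
    apply HasDerivAt.fun_sum
    intro ν _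
    exact term_deriv _ ν (N - ν) (c ν) b
  rw [key N (by omega) (b : ℂ) c] at hder
  convert hder using 1
  -- now prove the RHS equality
  have hint : ∀ a c' : ℝ, IntervalIntegrable Ψ MeasureTheory.volume a c' :=
    fun a c' => hΨ.intervalIntegrable a c'
  -- c (ν+1) - c ν
  have hcd : ∀ ν : ℕ, c (ν + 1) - c ν = ∫ x in (b₀' + ν * h)..(b₀' + ν * h + h), Ψ x := by
    intro ν
    have e1 : b₀' + (↑(ν+1) : ℝ) * (1 - ε) / N = b₀' + ν * h + h := by
      push_cast; rw [hh]; ring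
    have e2 : b₀' + (ν : ℝ) * (1 - ε) / N = b₀' + ν * h := by
      rw [hh]; ring
    simp only [hc, e1, e2]
    exact intervalIntegral.integral_interval_sub_left (hint _ _) (hint _ _)
  -- substitution
  have hsub : ∀ a : ℝ, (∫ x in a..(a + h), Ψ x) = h • ∫ ξ in (0:ℝ)..1, Ψ (h * ξ + a) := by
    intro a
    rw [intervalIntegral.smul_integral_comp_mul_add Ψ h a]
    norm_num [add_comm]
  -- argument rewriting
  have harg : ∀ (ν : ℕ) (ξ : ℝ),
      b₀' + (1 - ε) * ξ / N + ν * (1 - ε') / ((N : ℝ) - 1) = h * ξ + (b₀' + ν * h) := by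
    intro ν ξ
    rw [hε', hh]
    field_simp
    ring
  calc (1 - (ε : ℂ)) * ∫ ξ in (0:ℝ)..1,
        ∑ ν ∈ Finset.range N,
          ((N - 1).choose ν : ℂ) * (b : ℂ) ^ ν * (1 - (b : ℂ)) ^ (N - 1 - ν) *
            Ψ (b₀' + (1 - ε) * ξ / N + ν * (1 - ε') / ((N : ℝ) - 1))
      = (1 - (ε : ℂ)) * ∑ ν ∈ Finset.range N,
          ∫ ξ in (0:ℝ)..1, ((N - 1).choose ν : ℂ) * (b : ℂ) ^ ν * (1 - (b : ℂ)) ^ (N - 1 - ν) *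
            Ψ (h * ξ + (b₀' + ν * h)) := by
        congr 1
        rw [intervalIntegral.integral_finset_sum]
        · exact Finset.sum_congr rfl fun ν _ => by
            congr 1; ext ξ; rw [harg ν ξ]
        · intro ν _
          exact ((continuous_const.mul (hΨ.comp (by continuity))).intervalIntegrable _ _)
    _ = (N : ℂ) * ∑ ν ∈ Finset.range N,
          ((N - 1).choose ν : ℂ) * (b : ℂ) ^ ν * (1 - (b : ℂ)) ^ (N - 1 - ν) *
            (c (ν + 1) - c ν) := by
        rw [Finset.mul_sum, Finset.mul_sum]
        refine Finset.sum_congr rfl fun ν _ => ?_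
        rw [intervalIntegral.integral_const_mul, hcd ν, hsub (b₀' + ν * h)]
        rw [Complex.real_smul]
        have hNC : (N : ℂ) ≠ 0 := Nat.cast_ne_zero.mpr (by omega)
        have : (1 - (ε : ℂ)) = (N : ℂ) * (h : ℂ) := by
          rw [hh]; push_cast; field_simp
        rw [this]; ring
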